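/- Let G(m,p,n) act on ℂⁿ and let g be a nondiagonal element (i.e., the underlying permutation of g is not the identity). Then there exists a transposition-type reflection s in G(m,p,n) with codim(gs) < codim(g). Hence every nonreflection atom in the codimension order of G(m,p,n) is a diagonal matrix. -/

import Mathlib

open Module Matrix

noncomputable section

/-- The primitive m-th root of unity e^{2πi/m}. -/
def zeta (m : ℕ) : ℂ := Complex.exp (2 * Real.pi * Complex.I / m)

/-- codim of a matrix: n minus the dimension of its fixed space. -/
def codimM {n : ℕ} (M : Matrix (Fin n) (Fin n) ℂ) : ℕ :=
  n - finrank ℂ (LinearMap.ker (M.mulVecLin - LinearMap.id))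

/-- Membership in the monomial reflection group G(m,p,n): a monomial matrix with
entries m-th roots of unity whose nonzero entries multiply to an (m/p)-th root of unity. -/
def InG (m p n : ℕ) (M : Matrix (Fin n) (Fin n) ℂ) : Prop :=
  ∃ (σ : Equiv.Perm (Fin n)) (d : Fin n → ℂ),
    (∀ j, d j ^ m = 1) ∧ ((∏ j, d j) ^ (m / p) = 1) ∧
    ∀ i j, M i j = if i = σ j then d j else 0

/-- A reflection of G(m,p,n): a nonidentity element of the group fixing a hyperplane
pointwise (i.e. of codimension one). -/
def IsReflM (m p n : ℕ) (M : Matrix (Fin n) (Fin n) ℂ) : Prop :=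
  InG m p n M ∧ M ≠ 1 ∧ codimM M = 1

/-- Reflection length in G(m,p,n). -/
def reflLenM (m p n : ℕ) (M : Matrix (Fin n) (Fin n) ℂ) : ℕ :=
  sInf {k | ∃ l : List (Matrix (Fin n) (Fin n) ℂ),
    (∀ s ∈ l, IsReflM m p n s) ∧ l.length = k ∧ l.prod = M}

/-- Transposition-type reflection: swaps coordinates i and j scaling by ζ^a and ζ^{-a}. -/
def IsTranspRefl (m n : ℕ) (M : Matrix (Fin n) (Fin n) ℂ) : Prop :=
  ∃ (i j : Fin n) (c : ℂ), i ≠ j ∧ c ^ m = 1 ∧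
    M = Matrix.of (fun k l =>
      if k = i ∧ l = j then c
      else if k = j ∧ l = i then c⁻¹
      else if k = l ∧ k ≠ i ∧ k ≠ j then 1 else 0)

/-- The codimension order relation on matrices. -/
def codimLeM {n : ℕ} (a c : Matrix (Fin n) (Fin n) ℂ) : Prop :=
  codimM a + codimM (a⁻¹ * c) = codimM c

/-! ### Auxiliary machinery -/

/-- The monomial matrix attached to a permutation and a vector of scalars. -/
def MonM {n : ℕ} (σ : Equiv.Perm (Fin n)) (d : Fin n → ℂ) : Matrix (Fin n) (Fin n) ℂ :=
  Matrix.of fun i j => if i = σ j then d j else 0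

/-- The fixed space of a matrix. -/
def Fx {n : ℕ} (M : Matrix (Fin n) (Fin n) ℂ) : Submodule ℂ (Fin n → ℂ) :=
  LinearMap.ker (M.mulVecLin - LinearMap.id)

lemma codimM_eq_Fx {n : ℕ} (M : Matrix (Fin n) (Fin n) ℂ) :
    codimM M = n - finrank ℂ (Fx M) := rfl

lemma mem_Fx {n : ℕ} (M : Matrix (Fin n) (Fin n) ℂ) (v : Fin n → ℂ) :
    v ∈ Fx M ↔ M.mulVec v = v := by
  simp [Fx, LinearMap.mem_ker, sub_eq_zero]

lemma MonM_mul {n : ℕ} (σ τ : Equiv.Perm (Fin n)) (d e : Fin n → ℂ) :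
    MonM σ d * MonM τ e = MonM (σ * τ) (fun l => d (τ l) * e l) := by
  ext k l
  simp only [MonM, Matrix.mul_apply, Matrix.of_apply, Equiv.Perm.mul_apply]
  rw [Finset.sum_eq_single (τ l)]
  · by_cases h : k = σ (τ l) <;> simp [h]
  · intro b _ hb
    by_cases h : k = σ b <;> simp [h, hb]
  · simp

lemma MonM_one {n : ℕ} : MonM (1 : Equiv.Perm (Fin n)) (fun _ => 1) = 1 := by
  ext k l
  simp [MonM, Matrix.one_apply]
  by_cases h : k = l <;> simp [h]

lemma mem_Fx_MonM {n : ℕ} (σ : Equiv.Perm (Fin n)) (d : Fin n → ℂ) (v : Fin n → ℂ) :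
    v ∈ Fx (MonM σ d) ↔ ∀ l, v (σ l) = d l * v l := by
  rw [mem_Fx]
  constructor
  · intro h l
    have := congrFun h (σ l)
    rw [← this]
    simp only [MonM, Matrix.mulVec, Matrix.of_apply, dotProduct]
    rw [Finset.sum_eq_single l]
    · simp
    · intro b _ hb
      have : σ l ≠ σ b := fun hc => hb (σ.injective hc.symm)
      simp [this]
    · simp
  · intro h
    funext k
    simp only [MonM, Matrix.mulVec, Matrix.of_apply, dotProduct]
    rw [Finset.sum_eq_single (σ⁻¹ k)]
    · simp; rw [← h]; simp
    · intro b _ hb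
      have : k ≠ σ b := by
        intro hc; exact hb (by rw [hc]; simp)
      simp [this]
    · simp

lemma finrank_add_one_le {n : ℕ} (V W : Submodule ℂ (Fin n → ℂ)) (u : Fin n → ℂ) (hu : u ∈ W)
    (hVW : V ≤ W) (k : Fin n) (hVk : ∀ v ∈ V, v k = 0) (huk : u k = 1) :
    finrank ℂ V + 1 ≤ finrank ℂ W := by
  have hmem : ∀ x : V × ℂ, (x.1 : Fin n → ℂ) + x.2 • u ∈ W := fun x =>
    W.add_mem (hVW x.1.2) (W.smul_mem _ hu)
  let f : V × ℂ →ₗ[ℂ] W := LinearMap.codRestrict W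
    (V.subtype.comp (LinearMap.fst ℂ V ℂ) +
      (LinearMap.toSpanSingleton ℂ (Fin n → ℂ) u).comp (LinearMap.snd ℂ V ℂ)) hmem
  have hf : Function.Injective f := by
    rw [← LinearMap.ker_eq_bot, LinearMap.ker_eq_bot']
    rintro ⟨v, a⟩ h
    have h0 : (v : Fin n → ℂ) + a • u = 0 := congrArg Subtype.val h
    have ha : a = 0 := by
      have := congrFun h0 k
      simp [hVk v v.2, huk] at this
      exact this
    have hv : (v : Fin n → ℂ) = 0 := by simpa [ha] using h0
    exact Prod.ext (Subtype.ext hv) ha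
  calc finrank ℂ V + 1 = finrank ℂ (V × ℂ) := by
        simp [Module.finrank_prod]
    _ ≤ finrank ℂ W := LinearMap.finrank_le_finrank_of_injective hf

lemma finrank_add_two_le {n : ℕ} (V W : Submodule ℂ (Fin n → ℂ)) (u₁ u₂ : Fin n → ℂ)
    (hu₁ : u₁ ∈ W) (hu₂ : u₂ ∈ W) (hVW : V ≤ W) (k₁ k₂ : Fin n)
    (hVk₁ : ∀ v ∈ V, v k₁ = 0) (hVk₂ : ∀ v ∈ V, v k₂ = 0)
    (h11 : u₁ k₁ = 1) (h12 : u₁ k₂ = 0) (h22 : u₂ k₂ = 1) :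
    finrank ℂ V + 2 ≤ finrank ℂ W := by
  have h1 : finrank ℂ V + 1 ≤ finrank ℂ ↥(V ⊔ Submodule.span ℂ {u₁}) :=
    finrank_add_one_le V _ u₁
      (Submodule.mem_sup_right (Submodule.mem_span_singleton_self u₁)) le_sup_left k₁ hVk₁ h11
  have h2 : finrank ℂ ↥(V ⊔ Submodule.span ℂ {u₁}) + 1 ≤ finrank ℂ W := by
    apply finrank_add_one_le _ W u₂ hu₂ _ k₂ _ h22
    · exact sup_le hVW ((Submodule.span_singleton_le_iff_mem u₁ W).2 hu₁)
    · intro v hv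
      obtain ⟨a, ha, b, hb, rfl⟩ := Submodule.mem_sup.1 hv
      obtain ⟨c, rfl⟩ := Submodule.mem_span_singleton.1 hb
      simp [hVk₂ a ha, h12]
  omega

lemma rank_le_ker_add_one {n : ℕ} (V : Submodule ℂ (Fin n → ℂ)) (k : Fin n) :
    finrank ℂ V ≤
      finrank ℂ ↥(V ⊓ LinearMap.ker (LinearMap.proj k : (Fin n → ℂ) →ₗ[ℂ] ℂ)) + 1 := by
  set φ : V →ₗ[ℂ] ℂ := (LinearMap.proj k).comp V.subtype with hφ
  have hrn := LinearMap.finrank_range_add_finrank_ker φ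
  have hker : (LinearMap.ker φ).map V.subtype
      = V ⊓ LinearMap.ker (LinearMap.proj k : (Fin n → ℂ) →ₗ[ℂ] ℂ) := by
    ext x
    simp only [Submodule.mem_map, LinearMap.mem_ker, Submodule.mem_inf]
    constructor
    · rintro ⟨⟨y, hy⟩, h1, rfl⟩
      exact ⟨hy, h1⟩
    · rintro ⟨hx, h2⟩
      exact ⟨⟨x, hx⟩, h2, rfl⟩
  have e1 : finrank ℂ (LinearMap.ker φ)
      = finrank ℂ ↥(V ⊓ LinearMap.ker (LinearMap.proj k : (Fin n → ℂ) →ₗ[ℂ] ℂ)) := by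
    rw [← hker]
    exact (Submodule.equivMapOfInjective V.subtype V.injective_subtype _).finrank_eq
  have hr : finrank ℂ (LinearMap.range φ) ≤ 1 := by
    simpa using (LinearMap.range φ).finrank_le
  omega

lemma key_finrank {n : ℕ} (σ : Equiv.Perm (Fin n)) (d : Fin n → ℂ) (hd : ∀ l, d l ≠ 0)
    (i : Fin n) (hi : σ i ≠ i) :
    finrank ℂ (Fx (MonM σ d)) + 1 ≤
      finrank ℂ (Fx (MonM (σ * Equiv.swap i (σ i))
        (fun l => d (Equiv.swap i (σ i) l) *
          (if l = σ i then (d i)⁻¹ else if l = i then d i else 1)))) ∧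
    finrank ℂ (Fx (MonM σ d)) + 1 ≤ n := by
  set j := σ i with hj
  have hji : j ≠ i := hi
  have hij : i ≠ j := hji.symm
  set d' : Fin n → ℂ := fun l => d (Equiv.swap i j l) *
      (if l = j then (d i)⁻¹ else if l = i then d i else 1) with hd'
  set τ : Equiv.Perm (Fin n) := σ * Equiv.swap i j with hτ
  have hτj : τ j = j := by simp [hτ, Equiv.swap_apply_right, ← hj]
  have hτi : τ i = σ j := by simp [hτ, Equiv.swap_apply_left]
  have hτl : ∀ l, l ≠ i → l ≠ j → τ l = σ l := by
    intro l h1 h2; simp [hτ, Equiv.swap_apply_of_ne_of_ne h1 h2]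
  have hd'j : d' j = 1 := by
    simp [hd', Equiv.swap_apply_right, mul_inv_cancel₀ (hd i)]
  have hd'i : d' i = d j * d i := by
    simp [hd', Equiv.swap_apply_left, hij]
  have hd'l : ∀ l, l ≠ i → l ≠ j → d' l = d l := by
    intro l h1 h2; simp [hd', Equiv.swap_apply_of_ne_of_ne h1 h2, h1, h2]
  have hσjj : σ j ≠ j := fun hc => hji (σ.injective (hj ▸ hc))
  have hσlj : ∀ l, l ≠ i → σ l ≠ j := by
    intro l hl hc; exact hl (σ.injective (hc.trans hj))
  set K : Submodule ℂ (Fin n → ℂ) :=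
    Fx (MonM σ d) ⊓ LinearMap.ker (LinearMap.proj i : (Fin n → ℂ) →ₗ[ℂ] ℂ) with hK
  have hKi : ∀ v ∈ K, v i = 0 := fun v hv => hv.2
  have hKfix : ∀ v ∈ K, ∀ l, v (σ l) = d l * v l := fun v hv =>
    (mem_Fx_MonM σ d v).1 hv.1
  have hKj : ∀ v ∈ K, v j = 0 := by
    intro v hv
    rw [hj, hKfix v hv i, hKi v hv, mul_zero]
  -- K lands in Fix(Ms)
  have hKMs : K ≤ Fx (MonM τ d') := by
    intro v hv
    rw [mem_Fx_MonM]
    intro l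
    by_cases h1 : l = j
    · subst h1; rw [hτj, hKj v hv, mul_zero]
    · by_cases h2 : l = i
      · subst h2
        rw [hτi, hKfix v hv j, hKj v hv, hKi v hv, mul_zero, mul_zero]
      · rw [hτl l h2 h1, hd'l l h2 h1]; exact hKfix v hv l
  -- e_j ∈ Fix(Ms)
  have hej : Pi.single j (1:ℂ) ∈ Fx (MonM τ d') := by
    rw [mem_Fx_MonM]
    intro l
    by_cases h1 : l = j
    · subst h1; rw [hτj, hd'j]; simp
    · by_cases h2 : l = i
      · subst h2
        rw [hτi, Pi.single_eq_of_ne hσjj, Pi.single_eq_of_ne hij, mul_zero]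
      · rw [hτl l h2 h1, Pi.single_eq_of_ne (hσlj l h2), Pi.single_eq_of_ne h1, mul_zero]
  have hKtop : finrank ℂ K + 2 ≤ n := by
    have := finrank_add_two_le K ⊤ (Pi.single j 1) (Pi.single i 1)
      Submodule.mem_top Submodule.mem_top le_top j i hKj hKi
      (Pi.single_eq_same j 1) (Pi.single_eq_of_ne hij 1) (Pi.single_eq_same i 1)
    rwa [finrank_top, Module.finrank_fin_fun] at this
  by_cases hc : ∀ v ∈ Fx (MonM σ d), v i = 0
  · -- Case A : Fix M ≤ K
    have hFK : Fx (MonM σ d) ≤ K := fun v hv => ⟨hv, hc v hv⟩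
    have h1 : finrank ℂ (Fx (MonM σ d)) ≤ finrank ℂ K := Submodule.finrank_mono hFK
    have h2 : finrank ℂ K + 1 ≤ finrank ℂ (Fx (MonM τ d')) :=
      finrank_add_one_le K _ (Pi.single j 1) hej hKMs j hKj (Pi.single_eq_same j 1)
    exact ⟨by omega, by omega⟩
  · -- Case B : some fixed vector with v i ≠ 0
    push_neg at hc
    obtain ⟨v, hv, hvi⟩ := hc
    set w' : Fin n → ℂ := (v i)⁻¹ • v with hw'
    have hw'fix : ∀ l, w' (σ l) = d l * w' l := by
      intro l
      have := (mem_Fx_MonM σ d v).1 hv l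
      simp [hw', this]; ring
    have hw'i : w' i = 1 := by simp [hw', inv_mul_cancel₀ hvi]
    have hw'j : w' j = d i := by rw [hj, hw'fix i, hw'i, mul_one]
    set w : Fin n → ℂ := w' - d i • (Pi.single j 1 : Fin n → ℂ) with hw
    have hwi : w i = 1 := by simp [hw, hw'i, Pi.single_eq_of_ne hij]
    have hwj : w j = 0 := by simp [hw, hw'j]
    have hwl : ∀ l, l ≠ j → w l = w' l := by
      intro l hl; simp [hw, Pi.single_eq_of_ne hl]
    have hwMs : w ∈ Fx (MonM τ d') := by
      rw [mem_Fx_MonM]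
      intro l
      by_cases h1 : l = j
      · subst h1; rw [hτj, hwj, mul_zero]
      · by_cases h2 : l = i
        · subst h2
          rw [hτi, hwl _ hσjj, hw'fix j, hw'j, hwi, hd'i, mul_one]
        · rw [hτl l h2 h1, hd'l l h2 h1, hwl _ (hσlj l h2), hwl _ h1]
          exact hw'fix l
    have h1 : finrank ℂ (Fx (MonM σ d)) ≤ finrank ℂ K + 1 := rank_le_ker_add_one _ i
    have h2 : finrank ℂ K + 2 ≤ finrank ℂ (Fx (MonM τ d')) :=
      finrank_add_two_le K _ (Pi.single j 1) w hej hwMs hKMs j i hKj hKi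
        (Pi.single_eq_same j 1) (Pi.single_eq_of_ne hij 1) hwi
    exact ⟨by omega, by omega⟩

lemma transp_eq_MonM {n : ℕ} (i j : Fin n) (hij : i ≠ j) (c : ℂ) :
    (Matrix.of (fun k l =>
      if k = i ∧ l = j then c
      else if k = j ∧ l = i then c⁻¹
      else if k = l ∧ k ≠ i ∧ k ≠ j then 1 else 0) : Matrix (Fin n) (Fin n) ℂ)
    = MonM (Equiv.swap i j) (fun l => if l = j then c else if l = i then c⁻¹ else 1) := by
  ext k l
  simp only [MonM, Matrix.of_apply]
  by_cases hlj : l = j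
  · subst hlj
    rw [Equiv.swap_apply_right]
    by_cases hki : k = i
    · subst hki; simp [hij, hij.symm]
    · simp only [hki, false_and, if_false, if_pos rfl]
      by_cases hkl : k = l
      · subst hkl; simp [hki, hij.symm, Ne.symm hki]
      · simp [hkl, hki, fun h : l = i => hij h.symm]
  · by_cases hli : l = i
    · subst hli
      rw [Equiv.swap_apply_left]
      by_cases hkj : k = j
      · subst hkj; simp [hij, hij.symm, Ne.symm hij]
      · simp only [hkj, false_and, if_false, and_false, if_pos rfl]
        by_cases hkl : k = l
        · subst hkl; simp [hkj]
        · simp [hkl, hkj, Ne.symm hkj]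
    · rw [Equiv.swap_apply_of_ne_of_ne hli hlj, if_neg hlj, if_neg hli]
      by_cases hkl : k = l
      · subst hkl; simp [hli, hlj]
      · simp [hkl, hlj, hli]

lemma MonM_congr {n : ℕ} {σ τ : Equiv.Perm (Fin n)} {d e : Fin n → ℂ}
    (h1 : σ = τ) (h2 : ∀ l, d l = e l) : MonM σ d = MonM τ e := by
  subst h1; rw [show d = e from funext h2]

lemma MonM_mul_inv {n : ℕ} (σ : Equiv.Perm (Fin n)) (d : Fin n → ℂ) (hd : ∀ l, d l ≠ 0) :
    MonM σ d * MonM σ⁻¹ (fun l => (d (σ⁻¹ l))⁻¹) = 1 := by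
  rw [MonM_mul, ← MonM_one]
  exact MonM_congr (mul_inv_cancel σ) (fun l => mul_inv_cancel₀ (hd _))

lemma Fx_mul {n : ℕ} (A B : Matrix (Fin n) (Fin n) ℂ) : Fx A ⊓ Fx B ≤ Fx (A * B) := by
  intro v hv
  rw [mem_Fx]
  rw [← Matrix.mulVec_mulVec, (mem_Fx B v).1 hv.2, (mem_Fx A v).1 hv.1]

lemma codim_mul_le {n : ℕ} (A B : Matrix (Fin n) (Fin n) ℂ) :
    codimM (A * B) ≤ codimM A + codimM B := by
  have h1 := Submodule.finrank_sup_add_finrank_inf_eq (Fx A) (Fx B)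
  have h2 : finrank ℂ ↥(Fx A ⊓ Fx B) ≤ finrank ℂ (Fx (A * B)) :=
    Submodule.finrank_mono (Fx_mul A B)
  have h3 : finrank ℂ ↥(Fx A ⊔ Fx B) ≤ n := by
    simpa [Module.finrank_fin_fun] using (Fx A ⊔ Fx B).finrank_le
  have h4 : finrank ℂ (Fx (A * B)) ≤ n := by
    simpa [Module.finrank_fin_fun] using (Fx (A * B)).finrank_le
  have h5 : finrank ℂ (Fx A) ≤ n := by
    simpa [Module.finrank_fin_fun] using (Fx A).finrank_le
  have h6 : finrank ℂ (Fx B) ≤ n := by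
    simpa [Module.finrank_fin_fun] using (Fx B).finrank_le
  simp only [codimM_eq_Fx]
  omega

lemma codim_swap {n : ℕ} (i j : Fin n) (hij : i ≠ j) (e : Fin n → ℂ)
    (he : e i * e j = 1) (h1 : ∀ l, l ≠ i → l ≠ j → e l = 1) :
    codimM (MonM (Equiv.swap i j) e) = 1 := by
  set ψ : (Fin n → ℂ) →ₗ[ℂ] ℂ :=
    LinearMap.proj j - e i • LinearMap.proj i with hψ
  have hFx : Fx (MonM (Equiv.swap i j) e) = LinearMap.ker ψ := by
    ext v
    rw [mem_Fx_MonM, LinearMap.mem_ker]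
    simp only [hψ, LinearMap.sub_apply, LinearMap.smul_apply, LinearMap.proj_apply,
      smul_eq_mul, sub_eq_zero]
    constructor
    · intro h
      have := h i
      rwa [Equiv.swap_apply_left] at this
    · intro h l
      by_cases hli : l = i
      · subst hli; rwa [Equiv.swap_apply_left]
      · by_cases hlj : l = j
        · subst hlj
          rw [Equiv.swap_apply_right, h]
          rw [← mul_assoc, mul_comm (e l) (e i), he, one_mul]
        · rw [Equiv.swap_apply_of_ne_of_ne hli hlj, h1 l hli hlj, one_mul]
  have hsurj : LinearMap.range ψ = ⊤ := by
    rw [eq_top_iff]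
    intro z _
    refine ⟨z • (Pi.single j 1 : Fin n → ℂ), ?_⟩
    simp [hψ, Pi.single_eq_same, Pi.single_eq_of_ne hij]
  have hrn := LinearMap.finrank_range_add_finrank_ker ψ
  rw [hsurj, finrank_top, Module.finrank_self, Module.finrank_fin_fun] at hrn
  have hn : 1 ≤ n := by
    rcases Nat.eq_zero_or_pos n with h | h
    · subst h; exact i.elim0
    · exact h
  have heq : finrank ℂ (Fx (MonM (Equiv.swap i j) e)) = finrank ℂ (LinearMap.ker ψ) := by
    rw [hFx]
  simp only [codimM_eq_Fx, heq]
  omega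

lemma InG_mul {m p n : ℕ} (A B : Matrix (Fin n) (Fin n) ℂ)
    (hA : InG m p n A) (hB : InG m p n B) : InG m p n (A * B) := by
  obtain ⟨σ, d, hdm, hdp, hAdef⟩ := hA
  obtain ⟨τ, e, hem, hep, hBdef⟩ := hB
  have hAeq : A = MonM σ d := by ext k l; rw [hAdef]; rfl
  have hBeq : B = MonM τ e := by ext k l; rw [hBdef]; rfl
  refine ⟨σ * τ, fun l => d (τ l) * e l, ?_, ?_, ?_⟩
  · intro l; rw [mul_pow, hdm, hem, one_mul]
  · have hprod : ∏ l, d (τ l) * e l = (∏ l, d l) * ∏ l, e l := by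
      rw [Finset.prod_mul_distrib, Equiv.prod_comp τ d]
    rw [hprod, mul_pow, hdp, hep, one_mul]
  · intro k l
    rw [hAeq, hBeq, MonM_mul]
    rfl

theorem nondiagonal_not_atom (m p n : ℕ) (hm : 0 < m) (hp : 0 < p) (hdvd : p ∣ m) :
    (∀ M : Matrix (Fin n) (Fin n) ℂ, InG m p n M → (¬ ∃ d, M = Matrix.diagonal d) →
      ∃ s : Matrix (Fin n) (Fin n) ℂ, IsTranspRefl m n s ∧ InG m p n s ∧
        codimM (M * s) < codimM M) ∧
    (∀ M : Matrix (Fin n) (Fin n) ℂ, InG m p n M → M ≠ 1 → ¬ IsReflM m p n M →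
      (∀ h : Matrix (Fin n) (Fin n) ℂ, InG m p n h → h ≠ 1 → h ≠ M → ¬ codimLeM h M) →
      ∃ d, M = Matrix.diagonal d) := by
  have hdnz : ∀ (d : Fin n → ℂ), (∀ l, d l ^ m = 1) → ∀ l, d l ≠ 0 := by
    intro d h l hl
    have := h l
    rw [hl, zero_pow hm.ne'] at this
    exact zero_ne_one this
  have part1 : ∀ M : Matrix (Fin n) (Fin n) ℂ, InG m p n M → (¬ ∃ d, M = Matrix.diagonal d) →
      ∃ s : Matrix (Fin n) (Fin n) ℂ, IsTranspRefl m n s ∧ InG m p n s ∧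
        codimM (M * s) < codimM M := by
    intro M hM hnd
    obtain ⟨σ, d, hdm, hprod, hMdef⟩ := hM
    have hMeq : M = MonM σ d := by ext k l; rw [hMdef]; rfl
    have hd := hdnz d hdm
    have hex : ∃ i, σ i ≠ i := by
      by_contra hfix
      push_neg at hfix
      refine hnd ⟨d, ?_⟩
      ext k l
      rw [hMdef, hfix l]
      by_cases hkl : k = l
      · subst hkl; simp
      · simp [hkl, Matrix.diagonal_apply_ne _ hkl]
    obtain ⟨i, hi⟩ := hex
    have hij : i ≠ σ i := Ne.symm hi
    set ds : Fin n → ℂ := fun l => if l = σ i then (d i)⁻¹ else if l = i then d i else 1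
      with hds
    set s := MonM (Equiv.swap i (σ i)) ds with hs
    have hcm : ((d i)⁻¹) ^ m = 1 := by rw [inv_pow, hdm i, inv_one]
    have hdii : ((d i)⁻¹)⁻¹ = d i := inv_inv _
    refine ⟨s, ⟨i, σ i, (d i)⁻¹, hij, hcm, ?_⟩, ?_, ?_⟩
    · rw [hs, transp_eq_MonM i (σ i) hij]
      refine (MonM_congr rfl ?_).symm
      intro l
      by_cases h1 : l = σ i
      · simp [hds, h1]
      · by_cases h2 : l = i <;> simp [hds, h1, h2, hdii]
    · refine ⟨Equiv.swap i (σ i), ds, ?_, ?_, fun k l => rfl⟩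
      · intro l
        by_cases h1 : l = σ i
        · simpa [hds, h1] using hcm
        · by_cases h2 : l = i
          · subst h2; simp [hds, h1, hdm]
          · simp [hds, h1, h2]
      · have hone : ∏ l, ds l = 1 := by
          rw [← Finset.mul_prod_erase Finset.univ ds (Finset.mem_univ (σ i)),
            ← Finset.mul_prod_erase _ ds
              (Finset.mem_erase.2 ⟨hij, Finset.mem_univ i⟩)]
          have h2 : ∏ l ∈ (Finset.univ.erase (σ i)).erase i, ds l = 1 :=
            Finset.prod_eq_one (fun x hx => by
              simp only [Finset.mem_erase] at hx
              simp [hds, hx.1, hx.2.1])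
          rw [h2, mul_one]
          simp [hds, hij, inv_mul_cancel₀ (hd i)]
        rw [hone, one_pow]
    · have hk := key_finrank σ d hd i hi
      have hMs : M * s = MonM (σ * Equiv.swap i (σ i))
          (fun l => d (Equiv.swap i (σ i) l) *
            (if l = σ i then (d i)⁻¹ else if l = i then d i else 1)) := by
        rw [hMeq, hs, MonM_mul]
      have hle : finrank ℂ (Fx (MonM (σ * Equiv.swap i (σ i))
          (fun l => d (Equiv.swap i (σ i) l) *
            (if l = σ i then (d i)⁻¹ else if l = i then d i else 1)))) ≤ n := by
        simpa [Module.finrank_fin_fun] using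
          (Fx (MonM (σ * Equiv.swap i (σ i))
            (fun l => d (Equiv.swap i (σ i) l) *
              (if l = σ i then (d i)⁻¹ else if l = i then d i else 1)))).finrank_le
      rw [hMs, hMeq, codimM_eq_Fx, codimM_eq_Fx]
      omega
  refine ⟨part1, ?_⟩
  intro M hM hne hnrefl H
  by_contra hnd
  obtain ⟨s, hsrefl, hsG, hcodim⟩ := part1 M hM hnd
  obtain ⟨i, j, c, hij, hcm, hsdef⟩ := hsrefl
  have hc : c ≠ 0 := by
    intro h0
    rw [h0, zero_pow hm.ne'] at hcm
    exact zero_ne_one hcm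
  set ds : Fin n → ℂ := fun l => if l = j then c else if l = i then c⁻¹ else 1 with hds
  have hseq : s = MonM (Equiv.swap i j) ds := by rw [hsdef, transp_eq_MonM i j hij]
  have hdsnz : ∀ l, ds l ≠ 0 := by
    intro l
    by_cases h1 : l = j
    · simp [hds, h1, hc]
    · by_cases h2 : l = i
      · subst h2; simp [hds, h1, hc]
      · simp [hds, h1, h2]
  -- inverse of s
  set es : Fin n → ℂ := fun l => (ds ((Equiv.swap i j)⁻¹ l))⁻¹ with hes
  have hsinv_mul : s * MonM (Equiv.swap i j)⁻¹ es = 1 := by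
    rw [hseq, hes]
    exact MonM_mul_inv _ ds hdsnz
  have hsinv : s⁻¹ = MonM (Equiv.swap i j)⁻¹ es := Matrix.inv_eq_right_inv hsinv_mul
  have hss : s * s⁻¹ = 1 := by rw [hsinv]; exact hsinv_mul
  have hesi : es i = c⁻¹ := by
    rw [hes]
    simp [Equiv.swap_inv, Equiv.swap_apply_left, hds, hij.symm]
  have hesj : es j = c⁻¹⁻¹ := by
    rw [hes]
    simp [Equiv.swap_inv, Equiv.swap_apply_right, hds, hij]
  have hesl : ∀ l, l ≠ i → l ≠ j → es l = 1 := by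
    intro l h1 h2
    rw [hes]
    simp [Equiv.swap_inv, Equiv.swap_apply_of_ne_of_ne h1 h2, hds, h1, h2]
  have hcodims : codimM s⁻¹ = 1 := by
    rw [hsinv, show (Equiv.swap i j)⁻¹ = Equiv.swap i j from Equiv.swap_inv i j]
    refine codim_swap i j hij es ?_ hesl
    rw [hesi, hesj, mul_inv_cancel₀ (inv_ne_zero hc)]
  -- inverse of M
  obtain ⟨σ, d, hdm, hprodM, hMdef⟩ := hM
  have hMeq : M = MonM σ d := by ext k l; rw [hMdef]; rfl
  have hd := hdnz d hdm
  have hMinv_mul : M * MonM σ⁻¹ (fun l => (d (σ⁻¹ l))⁻¹) = 1 := by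
    rw [hMeq]; exact MonM_mul_inv σ d hd
  have hMinv : M⁻¹ = MonM σ⁻¹ (fun l => (d (σ⁻¹ l))⁻¹) := Matrix.inv_eq_right_inv hMinv_mul
  have hMinvM : M⁻¹ * M = 1 := by
    rw [hMinv]
    exact mul_eq_one_comm.1 hMinv_mul
  -- the element h := M * s contradicts minimality
  have hGm : InG m p n (M * s) := InG_mul M s ⟨σ, d, hdm, hprodM, hMdef⟩ hsG
  have hsne1 : s ≠ 1 := by
    intro h1
    have h2 : s i j = (1 : Matrix (Fin n) (Fin n) ℂ) i j := by rw [h1]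
    rw [hsdef, Matrix.one_apply_ne hij] at h2
    simp only [Matrix.of_apply, if_pos (⟨rfl, rfl⟩ : i = i ∧ j = j)] at h2
    exact hc h2
  have hneM : M * s ≠ M := by
    intro h1
    apply hsne1
    calc s = (M⁻¹ * M) * s := by rw [hMinvM, one_mul]
    _ = M⁻¹ * (M * s) := by rw [mul_assoc]
    _ = M⁻¹ * M := by rw [h1]
    _ = 1 := hMinvM
  have hne1 : M * s ≠ 1 := by
    intro h1
    have hMs : M = s⁻¹ := by
      have := Matrix.inv_eq_right_inv (mul_eq_one_comm.1 h1)
      rw [← this]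
    exact hnrefl ⟨⟨σ, d, hdm, hprodM, hMdef⟩, hne, by rw [hMs]; exact hcodims⟩
  apply H (M * s) hGm hne1 hneM
  -- codimLeM (M * s) M
  have hinvEq : (M * s)⁻¹ * M = s⁻¹ := by
    rw [Matrix.mul_inv_rev, mul_assoc, hMinvM, mul_one]
  have hsub : codimM M ≤ codimM (M * s) + codimM s⁻¹ := by
    have : (M * s) * s⁻¹ = M := by rw [mul_assoc, hss, mul_one]
    calc codimM M = codimM ((M * s) * s⁻¹) := by rw [this]
    _ ≤ codimM (M * s) + codimM s⁻¹ := codim_mul_le _ _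
  rw [codimLeM, hinvEq, hcodims]
  omega
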